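/- Suppose m = n and the vectors a₁−a, …, aₙ−a are linearly independent in ℝⁿ. Define H : ℝ^{n+1} → ℝ^{n+1} by H(z₀, z₁, …, zₙ) = (z₁+z₀, …, zₙ+z₀, −z₀). Then H(G(ℝⁿ)) = {(y, ḡ(y)) : y ∈ ℝⁿ}, the graph of a strictly convex quadratic function ḡ, where y = Ax + θ̂ with A the n×n matrix whose i-th row is −2(aᵢ−a)ᵀ and θ̂ = (θ₁−θ, …, θₙ−θ)ᵀ, and ḡ(y) = g(A⁻¹(y − θ̂)) is a quadratic with positive definite quadratic part (A⁻¹)ᵀA⁻¹. -/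

import Mathlib

open Matrix

theorem stmt10 (n : ℕ)
    (a : Fin n → ℝ) (aa : Fin n → (Fin n → ℝ)) (θ : ℝ) (θθ : Fin n → ℝ)
    (hind : LinearIndependent ℝ (fun i : Fin n => aa i - a))
    (g : (Fin n → ℝ) → ℝ) (gg : Fin n → (Fin n → ℝ) → ℝ)
    (hg : ∀ x, g x = x ⬝ᵥ x - 2 * (a ⬝ᵥ x) + θ)
    (hgg : ∀ i x, gg i x = x ⬝ᵥ x - 2 * (aa i ⬝ᵥ x) + θθ i)
    (A : Matrix (Fin n) (Fin n) ℝ) (hA : ∀ i j, A i j = -2 * (aa i j - a j))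
    (θhat : Fin n → ℝ) (hθhat : ∀ i, θhat i = θθ i - θ)
    (gbar : (Fin n → ℝ) → ℝ) (hgbar : ∀ y, gbar y = g (A⁻¹.mulVec (y - θhat)))
    (H : (Fin (n + 1) → ℝ) → (Fin (n + 1) → ℝ))
    (hH : ∀ z, H z = Fin.snoc (fun i : Fin n => z i.succ + z 0) (-(z 0))) :
    (H '' Set.range (fun x : Fin n → ℝ =>
        (Fin.cons (-(g x)) (fun i : Fin n => gg i x) : Fin (n + 1) → ℝ))
      = {w : Fin (n + 1) → ℝ | w (Fin.last n) = gbar (fun i : Fin n => w i.castSucc)}) ∧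
    (A⁻¹ᵀ * A⁻¹).PosDef := by
  -- A is invertible
  have hAunit : IsUnit A := by
    rw [← Matrix.linearIndependent_rows_iff_isUnit]
    have h2 : (fun i => A i) = fun i =>
        (Units.mk0 (-2 : ℝ) (by norm_num)) • ((fun i : Fin n => aa i - a) i) := by
      funext i j
      simp only [hA i j, Units.smul_def, Units.val_mk0, Pi.smul_apply, Pi.sub_apply,
        smul_eq_mul]
    show LinearIndependent ℝ (fun i => A i)
    rw [h2]
    exact hind.units_smul _
  have hdet : IsUnit A.det := A.isUnit_iff_isUnit_det.mp hAunit
  have hinv1 : ∀ x : Fin n → ℝ, A⁻¹ *ᵥ (A *ᵥ x) = x := by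
    intro x
    rw [mulVec_mulVec, nonsing_inv_mul A hdet, one_mulVec]
  have hinv2 : ∀ v : Fin n → ℝ, A *ᵥ (A⁻¹ *ᵥ v) = v := by
    intro v
    rw [mulVec_mulVec, mul_nonsing_inv A hdet, one_mulVec]
  -- key computation
  have key : ∀ (x : Fin n → ℝ) (i : Fin n), gg i x - g x = A.mulVec x i + θhat i := by
    intro x i
    have h1 : (A.mulVec x) i = ∑ j, (-2 * (aa i j - a j)) * x j := by
      simp [mulVec, dotProduct, hA]
    have h2 : ∑ j, (-2 * (aa i j - a j)) * x j
        = -(∑ j, 2 * aa i j * x j) + ∑ j, 2 * a j * x j := by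
      rw [← Finset.sum_neg_distrib, ← Finset.sum_add_distrib]
      exact Finset.sum_congr rfl (fun j _ => by ring)
    have h3 : ∀ v : Fin n → ℝ, 2 * (v ⬝ᵥ x) = ∑ j, 2 * v j * x j := by
      intro v
      simp [dotProduct, Finset.mul_sum, mul_assoc]
    rw [hgg, hg, hθhat, h1, h2, h3, h3]
    ring
  constructor
  · ext w
    simp only [Set.mem_image, Set.mem_range, Set.mem_setOf_eq, exists_exists_eq_and]
    constructor
    · rintro ⟨x, rfl⟩
      rw [hH]
      simp only [Fin.snoc_last, Fin.snoc_castSucc, Fin.cons_succ, Fin.cons_zero, neg_neg]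
      have hy : (fun i : Fin n => gg i x + -(g x)) = A *ᵥ x + θhat := by
        funext i
        have := key x i
        simp only [Pi.add_apply]
        linarith
      rw [hy, hgbar, add_sub_cancel_right, hinv1]
    · intro hw
      refine ⟨A⁻¹ *ᵥ ((fun i : Fin n => w i.castSucc) - θhat), ?_⟩
      rw [hH]
      set x := A⁻¹ *ᵥ ((fun i : Fin n => w i.castSucc) - θhat) with hxdef
      have hAx : A *ᵥ x = (fun i : Fin n => w i.castSucc) - θhat := hinv2 _
      have hgx : g x = w (Fin.last n) := by
        rw [hw, hgbar]
      funext k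
      refine Fin.lastCases ?_ (fun i => ?_) k
      · simp only [Fin.snoc_last, Fin.cons_zero, neg_neg]
        exact hgx
      · simp only [Fin.snoc_castSucc, Fin.cons_succ, Fin.cons_zero]
        have h1 := key x i
        have h2 : (A *ᵥ x) i = w i.castSucc - θhat i := by
          rw [hAx]; simp
        rw [h2] at h1
        linarith
  · -- positive definiteness
    have hunit' : IsUnit A⁻¹ := Matrix.isUnit_nonsing_inv_iff.mpr hAunit
    have hinj : Function.Injective (A⁻¹).mulVec :=
      Matrix.mulVec_injective_iff_isUnit.mpr hunit'
    rw [Matrix.posDef_iff_dotProduct_mulVec]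
    constructor
    · have h := Matrix.isHermitian_conjTranspose_mul_self A⁻¹
      simpa using h
    · intro x hx
      have hne : A⁻¹ *ᵥ x ≠ 0 := by
        intro h
        apply hx
        apply hinj
        rw [h, mulVec_zero]
      have hcalc : star x ⬝ᵥ (A⁻¹ᵀ * A⁻¹) *ᵥ x = (A⁻¹ *ᵥ x) ⬝ᵥ (A⁻¹ *ᵥ x) := by
        rw [← mulVec_mulVec, dotProduct_mulVec, star_trivial, vecMul_transpose]
      rw [hcalc]
      obtain ⟨i, hi⟩ := Function.ne_iff.mp hne
      simp only [dotProduct]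
      refine Finset.sum_pos' (fun j _ => mul_self_nonneg _) ⟨i, Finset.mem_univ i, ?_⟩
      exact mul_self_pos.mpr hi
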